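/- Let G be a finite abelian group whose order is N = p·q for distinct primes p, q (more generally, with p-primary part G_p and q-primary part G_q such that G = G_p × G_q), equipped with a nonsingular symmetric bilinear form λ : G × G → ℚ/ℤ. Then every metabolizer M of λ decomposes as M = M_p × M_q, where M_p = M ∩ G_p is a metabolizer of λ restricted to G_p and M_q = M ∩ G_q is a metabolizer of λ restricted to G_q. -/

import Mathlib

lemma stmt7_aux {A : Type*} [AddCommGroup A] {a b : ℕ} (h : Nat.Coprime a b) {t : A}
    (ha : a • t = 0) (hb : b • t = 0) : t = 0 := by
  obtain ⟨u, v, huv⟩ := Nat.isCoprime_iff_coprime.mpr h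
  calc t = ((u * (a : ℤ) + v * (b : ℤ))) • t := by rw [huv, one_zsmul]
  _ = u • ((a : ℤ) • t) + v • ((b : ℤ) • t) := by rw [add_zsmul, mul_zsmul, mul_zsmul]
  _ = 0 := by rw [natCast_zsmul, natCast_zsmul, ha, hb, smul_zero, smul_zero, add_zero]

/-- For a nonsingular symmetric bilinear form on a finite abelian group
`G = G_p × G_q` (internal direct sum of its `p`- and `q`-primary parts, `p ≠ q`
primes), every metabolizer `M` decomposes as `M = (M ∩ G_p) ⊔ (M ∩ G_q)`, where
`M ∩ G_p` is a metabolizer of the restriction of the form to `G_p`, and similarly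
for `q`. -/
theorem stmt7 (G : Type*) [AddCommGroup G] [Fintype G]
    (l : G → G → AddCircle (1 : ℚ))
    (hsymm : ∀ x y, l x y = l y x)
    (haddl : ∀ x y z, l (x + y) z = l x z + l y z)
    (haddr : ∀ x y z, l x (y + z) = l x y + l x z)
    (hinj : ∀ x, (∀ y, l x y = 0) → x = 0)
    (hsurj : ∀ f : G →+ AddCircle (1 : ℚ), ∃ x, ∀ y, l x y = f y)
    (p q : ℕ) (hp : p.Prime) (hq : q.Prime) (hpq : p ≠ q)
    (Gp Gq : AddSubgroup G)
    (hGp : ∀ x : G, x ∈ Gp ↔ ∃ k : ℕ, (p ^ k) • x = 0)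
    (hGq : ∀ x : G, x ∈ Gq ↔ ∃ k : ℕ, (q ^ k) • x = 0)
    (hsup : Gp ⊔ Gq = ⊤) (hinf : Gp ⊓ Gq = ⊥)
    (M : AddSubgroup G)
    (hM : {z : G | ∀ y ∈ M, l z y = 0} = (M : Set G)) :
    M = (M ⊓ Gp) ⊔ (M ⊓ Gq) ∧
    (∀ z ∈ Gp, ((∀ y ∈ M ⊓ Gp, l z y = 0) ↔ z ∈ M ⊓ Gp)) ∧
    (∀ z ∈ Gq, ((∀ y ∈ M ⊓ Gq, l z y = 0) ↔ z ∈ M ⊓ Gq)) := by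
  have hco : ∀ k m : ℕ, Nat.Coprime (p ^ k) (q ^ m) :=
    fun k m => Nat.Coprime.pow _ _ ((Nat.coprime_primes hp hq).mpr hpq)
  -- bilinearity helpers
  have hr : ∀ (x y : G) (n : ℕ), l x (n • y) = n • l x y := by
    intro x y n
    exact (AddMonoidHom.mk' (l x) (fun a b => haddr x a b)).map_nsmul n y
  have hl : ∀ (x y : G) (n : ℕ), l (n • x) y = n • l x y := by
    intro x y n; rw [hsymm, hr, hsymm]
  -- orthogonality of primary parts
  have ortho : ∀ z ∈ Gp, ∀ w ∈ Gq, l z w = 0 := by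
    intro z hz w hw
    obtain ⟨k, hk⟩ := (hGp z).mp hz
    obtain ⟨m, hm⟩ := (hGq w).mp hw
    refine stmt7_aux (hco k m) ?_ ?_
    · rw [← hl, hk]
      have h0 := haddl 0 0 w
      rw [zero_add] at h0
      exact (left_eq_add.mp h0)
    · rw [← hr, hm]
      have h0 := haddr z 0 0
      rw [zero_add] at h0
      exact (left_eq_add.mp h0)
  -- membership in M iff annihilates M
  have hMiff : ∀ z : G, z ∈ M ↔ ∀ y ∈ M, l z y = 0 := by
    intro z
    constructor
    · intro hz y hy
      have : z ∈ {z : G | ∀ y ∈ M, l z y = 0} := by rw [hM]; exact hz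
      exact this y hy
    · intro h
      have : z ∈ {z : G | ∀ y ∈ M, l z y = 0} := h
      rw [hM] at this; exact this
  -- decomposition of M
  have hdec : M = (M ⊓ Gp) ⊔ (M ⊓ Gq) := by
    refine le_antisymm ?_ (sup_le inf_le_left inf_le_left)
    intro x hx
    have hxtop : x ∈ Gp ⊔ Gq := by rw [hsup]; trivial
    obtain ⟨a, ha, b, hb, hab⟩ := AddSubgroup.mem_sup.mp hxtop
    obtain ⟨k, hk⟩ := (hGp a).mp ha
    obtain ⟨m, hm⟩ := (hGq b).mp hb
    obtain ⟨u, v, huv⟩ := Nat.isCoprime_iff_coprime.mpr (hco k m)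
    have key : a = (v * ((q ^ m : ℕ) : ℤ)) • x := by
      rw [← hab, smul_add]
      have h1 : (v * ((q ^ m : ℕ) : ℤ)) • b = 0 := by
        rw [mul_zsmul, natCast_zsmul, hm, smul_zero]
      have h2 : (v * ((q ^ m : ℕ) : ℤ)) • a = a := by
        have h3 : (u * ((p ^ k : ℕ) : ℤ)) • a = 0 := by
          rw [mul_zsmul, natCast_zsmul, hk, smul_zero]
        calc (v * ((q ^ m : ℕ) : ℤ)) • a
            = (u * ((p ^ k : ℕ) : ℤ)) • a + (v * ((q ^ m : ℕ) : ℤ)) • a := by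
              rw [h3, zero_add]
          _ = ((u * ((p ^ k : ℕ) : ℤ)) + v * ((q ^ m : ℕ) : ℤ)) • a := by rw [add_zsmul]
          _ = a := by rw [huv, one_zsmul]
      rw [h1, h2, add_zero]
    have haM : a ∈ M := key ▸ M.zsmul_mem hx _
    have hbM : b ∈ M := by
      have : b = x - a := by rw [← hab]; abel
      rw [this]; exact M.sub_mem hx haM
    have : x = a + b := hab.symm
    rw [this]
    exact AddSubgroup.add_mem_sup ⟨haM, ha⟩ ⟨hbM, hb⟩
  refine ⟨hdec, ?_, ?_⟩
  · intro z hzp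
    constructor
    · intro h
      refine ⟨(hMiff z).mpr ?_, hzp⟩
      intro y hy
      rw [hdec] at hy
      obtain ⟨a, ha, b, hb, hab⟩ := AddSubgroup.mem_sup.mp hy
      rw [← hab, haddr, h a ha, ortho z hzp b hb.2, add_zero]
    · rintro ⟨hzM, -⟩ y hy
      exact (hMiff z).mp hzM y hy.1
  · intro z hzq
    constructor
    · intro h
      refine ⟨(hMiff z).mpr ?_, hzq⟩
      intro y hy
      rw [hdec] at hy
      obtain ⟨a, ha, b, hb, hab⟩ := AddSubgroup.mem_sup.mp hy
      rw [← hab, haddr, h b hb, add_zero, hsymm, ortho a ha.2 z hzq]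
    · rintro ⟨hzM, -⟩ y hy
      exact (hMiff z).mp hzM y hy.1
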